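/- Let λ ∈ ℂ and let q₁, q₂, q₃, q₄ be real-valued functions integrable on (0,1) with q_j(z) = q_j(1−z) for a.e. z ∈ (0,1) (symmetric potentials on the four edges incident to a vertex v of the square lattice, each edge oriented away from v). For j = 1,…,4 let (S_j, S_j') be the solution of −u'' + q_j u = λu with S_j(0) = 0, S_j'(0) = 1, and assume S_j(1) ≠ 0. Let (u_j, u_j'), j = 1,…,4, be solutions of −u'' + q_j u = λu satisfying the Kirchhoff conditions u₁(0) = u₂(0) = u₃(0) = u₄(0) and u₁'(0) + u₂'(0) + u₃'(0) + u₄'(0) = 0. Then (1/4)·∑_{j=1}^4 u_j(1)/S_j(1) = ( (1/4)·∑_{j=1}^4 S_j'(1)/S_j(1) )·u₁(0); that is, the vertex values satisfy the reduced vertex Schrödinger equation (−Δ_{V,λ} + Q_{V,λ})u = 0 at v. (Lemma 3.1.) -/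

import Mathlib

open MeasureTheory

open Set

/-- Carathéodory/H² formulation: the pair `(u, u')` solves `−u'' + q·u = λ·u` on `[0,1]`. -/
def SchrodingerSol (q : ℝ → ℝ) (lam : ℂ) (u u' : ℝ → ℂ) : Prop :=
  ∀ z ∈ Set.Icc (0 : ℝ) 1,
    (u z = u 0 + ∫ t in (0 : ℝ)..z, u' t) ∧
    (u' z = u' 0 + ∫ t in (0 : ℝ)..z, ((q t : ℂ) - lam) * u t)

lemma my_gronwall_bound {h : ℝ → ℝ} (hh : IntervalIntegrable h volume 0 1)
    (hh0 : ∀ t, 0 ≤ h t) {f : ℝ → ℝ} {b : ℝ} (hb : b ≤ 1)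
    (hfc : ContinuousOn f (Set.Ico 0 b))
    (hfnn : ∀ z ∈ Set.Ico (0:ℝ) b, 0 ≤ f z)
    (hineq : ∀ y z, 0 ≤ y → y ≤ z → z < b → f z ≤ f y + ∫ t in y..z, h t * f t)
    (hint : ∀ y z, 0 ≤ y → y ≤ z → z < b → IntervalIntegrable (fun t => h t * f t) volume y z) :
    ∃ M, ∀ z ∈ Set.Ico (0:ℝ) b, f z ≤ M := by
  -- primitive of h
  set ψ : ℝ → ℝ := fun z => ∫ t in (0:ℝ)..z, h t with hψ
  have hψc : ContinuousOn ψ (Icc 0 1) := by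
    have := intervalIntegral.continuousOn_primitive_interval' hh Set.left_mem_uIcc
    simpa [Set.uIcc_of_le (zero_le_one' ℝ)] using this
  have hψuc : UniformContinuousOn ψ (Icc 0 1) :=
    isCompact_Icc.uniformContinuousOn_of_continuous hψc
  obtain ⟨δ, hδ0, hδ⟩ := (Metric.uniformContinuousOn_iff.1 hψuc) (1/2) (by norm_num)
  set d := δ / 2 with hd
  have hd0 : 0 < d := by positivity
  -- mass of h over short intervals
  have hmass : ∀ y z : ℝ, 0 ≤ y → y ≤ z → z ≤ 1 → z - y ≤ d → (∫ t in y..z, h t) ≤ 1/2 := by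
    intro y z h0 hyz h1 hzd
    have hy1 : y ∈ Icc (0:ℝ) 1 := ⟨h0, le_trans hyz h1⟩
    have hz1 : z ∈ Icc (0:ℝ) 1 := ⟨le_trans h0 hyz, h1⟩
    have hdist : dist z y < δ := by
      rw [Real.dist_eq, abs_of_nonneg (by linarith)]
      linarith
    have := hδ z hz1 y hy1 hdist
    have hsplit : ψ y + ∫ t in y..z, h t = ψ z := by
      exact intervalIntegral.integral_add_adjacent_intervals
        (hh.mono_set (by rw [Set.uIcc_of_le h0, Set.uIcc_of_le (zero_le_one' ℝ)]; exact Set.Icc_subset_Icc le_rfl hy1.2))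
        (hh.mono_set (by rw [Set.uIcc_of_le hyz, Set.uIcc_of_le (zero_le_one' ℝ)]; exact Set.Icc_subset_Icc h0 h1))
    have habs : |ψ z - ψ y| < 1/2 := by
      rw [Real.dist_eq] at this; exact this
    have : (∫ t in y..z, h t) = ψ z - ψ y := by linarith
    rw [this]
    calc ψ z - ψ y ≤ |ψ z - ψ y| := le_abs_self _
      _ ≤ 1/2 := le_of_lt habs
  -- main induction
  have key : ∀ k : ℕ, ∀ z, 0 ≤ z → z < b → z ≤ k * d → f z ≤ 2 ^ k * f 0 := by
    intro k
    induction k with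
    | zero =>
      intro z h0 hzb hzk
      simp only [Nat.cast_zero, zero_mul] at hzk
      have : z = 0 := le_antisymm hzk h0
      subst this; simp
    | succ k ih =>
      intro z h0 hzb hzk
      have hf0 : 0 ≤ f 0 := hfnn 0 ⟨le_rfl, lt_of_le_of_lt h0 hzb⟩
      by_cases hzk' : z ≤ k * d
      · calc f z ≤ 2 ^ k * f 0 := ih z h0 hzb hzk'
          _ ≤ 2 ^ (k+1) * f 0 := by
            apply mul_le_mul_of_nonneg_right _ hf0
            exact pow_le_pow_right₀ (by norm_num) (Nat.le_succ k)
      · push_neg at hzk'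
        set y : ℝ := k * d with hy
        have hy0 : 0 ≤ y := by positivity
        have hyz : y ≤ z := le_of_lt hzk'
        have hyb : y < b := lt_of_le_of_lt hyz hzb
        have hfy : f y ≤ 2 ^ k * f 0 := ih y hy0 hyb le_rfl
        -- max on [y,z]
        have hsub : Icc y z ⊆ Ico 0 b := fun t ht => ⟨le_trans hy0 ht.1, lt_of_le_of_lt ht.2 hzb⟩
        obtain ⟨ζ, hζmem, hζmax⟩ := isCompact_Icc.exists_isMaxOn (Set.nonempty_Icc.2 hyz)
          (hfc.mono hsub)
        have hζb : ζ < b := lt_of_le_of_lt hζmem.2 hzb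
        have hζ0 : 0 ≤ ζ := le_trans hy0 hζmem.1
        have hζnn : 0 ≤ f ζ := hfnn ζ ⟨hζ0, hζb⟩
        have hmain : f ζ ≤ f y + (1/2) * f ζ := by
          have h1 : f ζ ≤ f y + ∫ t in y..ζ, h t * f t := hineq y ζ hy0 hζmem.1 hζb
          have h2 : (∫ t in y..ζ, h t * f t) ≤ ∫ t in y..ζ, h t * f ζ := by
            apply intervalIntegral.integral_mono_on hζmem.1
              (hint y ζ hy0 hζmem.1 hζb)
              ((hh.mono_set (by
                rw [Set.uIcc_of_le hζmem.1, Set.uIcc_of_le (zero_le_one' ℝ)]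
                exact Set.Icc_subset_Icc hy0 (le_trans hζb.le hb))).mul_const (f ζ))
            intro t ht
            have htmem : t ∈ Icc y z := ⟨ht.1, le_trans ht.2 hζmem.2⟩
            exact mul_le_mul_of_nonneg_left (hζmax htmem) (hh0 t)
          have h3 : (∫ t in y..ζ, h t * f ζ) = (∫ t in y..ζ, h t) * f ζ :=
            intervalIntegral.integral_mul_const _ _
          have h4 : (∫ t in y..ζ, h t) ≤ 1/2 := by
            apply hmass y ζ hy0 hζmem.1 (le_trans hζb.le hb)
            have : z ≤ y + d := by
              have : (k+1 : ℝ) * d = y + d := by rw [hy]; ring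
              rw [← this]; exact_mod_cast hzk
            linarith [hζmem.2]
          calc f ζ ≤ f y + ∫ t in y..ζ, h t * f t := h1
            _ ≤ f y + (∫ t in y..ζ, h t) * f ζ := by rw [← h3] at *; linarith
            _ ≤ f y + (1/2) * f ζ := by nlinarith
        have hfz : f z ≤ f ζ := hζmax ⟨hyz, le_rfl⟩
        have : f ζ ≤ 2 * f y := by linarith
        calc f z ≤ f ζ := hfz
          _ ≤ 2 * f y := this
          _ ≤ 2 * (2 ^ k * f 0) := by linarith
          _ = 2 ^ (k+1) * f 0 := by ring
  refine ⟨2 ^ (Nat.ceil (1/d)) * f 0, fun z hz => ?_⟩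
  apply key (Nat.ceil (1/d)) z hz.1 hz.2
  have h1 : (1:ℝ)/d ≤ Nat.ceil (1/d) := Nat.le_ceil _
  have : (1:ℝ) ≤ (Nat.ceil (1/d) : ℝ) * d := by
    rw [div_le_iff₀ hd0] at h1; linarith
  linarith [hz.2, hb]

lemma my_regular {q : ℝ → ℝ} {lam : ℂ} {u u' : ℝ → ℂ}
    (hq : IntegrableOn q (Set.Ioo 0 1)) (hsol : SchrodingerSol q lam u u') :
    IntegrableOn u' (Set.Ioc 0 1) ∧
    IntegrableOn (fun t => ((q t : ℂ) - lam) * u t) (Set.Ioc 0 1) ∧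
    ContinuousOn u (Set.Icc 0 1) ∧ ContinuousOn u' (Set.Icc 0 1) := by
  set g : ℝ → ℂ := fun t => ((q t : ℂ) - lam) * u t with hgdef
  have hQ : IntegrableOn (fun t => ((q t : ℂ) - lam)) (Set.Ioc 0 1) := by
    have h1 : IntegrableOn q (Set.Ioc 0 1) := hq.congr_set_ae Ioo_ae_eq_Ioc.symm
    exact (MeasureTheory.Integrable.ofReal h1).sub
      (integrableOn_const measure_Ioc_lt_top.ne)
  have key₁ : ∀ z ∈ Icc (0:ℝ) 1, IntervalIntegrable u' volume 0 z →
      ContinuousOn u (Icc 0 z) := by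
    intro z hz hint
    have h2 := intervalIntegral.continuousOn_primitive_interval' hint Set.left_mem_uIcc
    rw [Set.uIcc_of_le hz.1] at h2
    exact ContinuousOn.congr (continuousOn_const.add h2)
      (fun y hy => (hsol y ⟨hy.1, le_trans hy.2 hz.2⟩).1)
  have key₂ : ∀ z ∈ Icc (0:ℝ) 1, IntervalIntegrable g volume 0 z →
      ContinuousOn u' (Icc 0 z) := by
    intro z hz hint
    have h2 := intervalIntegral.continuousOn_primitive_interval' hint Set.left_mem_uIcc
    rw [Set.uIcc_of_le hz.1] at h2
    exact ContinuousOn.congr (continuousOn_const.add h2)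
      (fun y hy => (hsol y ⟨hy.1, le_trans hy.2 hz.2⟩).2)
  -- the set of good endpoints
  set D : Set ℝ := {z | z ∈ Icc (0:ℝ) 1 ∧ IntervalIntegrable u' volume 0 z ∧
    IntervalIntegrable g volume 0 z} with hDdef
  have hD0 : (0:ℝ) ∈ D := ⟨⟨le_rfl, zero_le_one⟩, IntervalIntegrable.refl, IntervalIntegrable.refl⟩
  have hDne : D.Nonempty := ⟨0, hD0⟩
  have hBdd : BddAbove D := ⟨1, fun z hz => hz.1.2⟩
  set c := sSup D with hcdef
  have hc0 : 0 ≤ c := le_csSup hBdd hD0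
  have hc1 : c ≤ 1 := csSup_le hDne (fun z hz => hz.1.2)
  have hmem : ∀ z, 0 ≤ z → z < c → z ∈ D := by
    intro z h0 hz
    obtain ⟨d, hdD, hzd⟩ := exists_lt_of_lt_csSup hDne hz
    refine ⟨⟨h0, le_trans hzd.le hdD.1.2⟩, hdD.2.1.mono_set ?_, hdD.2.2.mono_set ?_⟩ <;>
    · rw [Set.uIcc_of_le h0, Set.uIcc_of_le hdD.1.1]
      exact Set.Icc_subset_Icc le_rfl hzd.le
  have hcontu : ContinuousOn u (Ico 0 c) := by
    intro z hz
    obtain ⟨d, hdD, hzd⟩ := exists_lt_of_lt_csSup hDne hz.2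
    have h2 := key₁ d hdD.1 hdD.2.1
    refine (h2.continuousWithinAt ⟨hz.1, hzd.le⟩).mono_of_mem_nhdsWithin ?_
    refine Filter.mem_of_superset (inter_mem_nhdsWithin _ (Iio_mem_nhds hzd)) ?_
    exact fun x hx => ⟨hx.1.1, hx.2.le⟩
  have hcontu' : ContinuousOn u' (Ico 0 c) := by
    intro z hz
    obtain ⟨d, hdD, hzd⟩ := exists_lt_of_lt_csSup hDne hz.2
    have h2 := key₂ d hdD.1 hdD.2.2
    refine (h2.continuousWithinAt ⟨hz.1, hzd.le⟩).mono_of_mem_nhdsWithin ?_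
    refine Filter.mem_of_superset (inter_mem_nhdsWithin _ (Iio_mem_nhds hzd)) ?_
    exact fun x hx => ⟨hx.1.1, hx.2.le⟩
  -- Gronwall setup
  set h : ℝ → ℝ := fun t => 2 + 2 * ‖(q t : ℂ) - lam‖ with hhdef
  set f : ℝ → ℝ := fun t => ‖u t‖ + ‖u' t‖ with hfdef
  have hhI : IntegrableOn h (Ioc 0 1) :=
    (integrableOn_const measure_Ioc_lt_top.ne).add (hQ.norm.const_mul 2)
  have hh : IntervalIntegrable h volume 0 1 :=
    (intervalIntegrable_iff_integrableOn_Ioc_of_le zero_le_one).2 hhI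
  have hh0 : ∀ t, 0 ≤ h t := fun t => by positivity
  have hfc : ContinuousOn f (Ico 0 c) := hcontu.norm.add hcontu'.norm
  have hfnn : ∀ z ∈ Ico (0:ℝ) c, 0 ≤ f z := fun z _ => by positivity
  have hWint : ∀ y z, 0 ≤ y → y ≤ z → z < c →
      IntervalIntegrable (fun t => h t * f t) volume y z := by
    intro y z hy0 hyz hzc
    have hsub : Icc y z ⊆ Ico 0 c := fun t ht => ⟨le_trans hy0 ht.1, lt_of_le_of_lt ht.2 hzc⟩
    have hsub2 : Ioc y z ⊆ Ioc 0 1 := Ioc_subset_Ioc hy0 (le_trans hzc.le hc1)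
    obtain ⟨ζ, hζmem, hζmax⟩ := isCompact_Icc.exists_isMaxOn (Set.nonempty_Icc.2 hyz)
      (hfc.mono hsub)
    rw [intervalIntegrable_iff_integrableOn_Ioc_of_le hyz]
    have hfm : AEStronglyMeasurable f (volume.restrict (Ioc y z)) :=
      ((hfc.mono hsub).mono Ioc_subset_Icc_self).aestronglyMeasurable measurableSet_Ioc
    have hbd : ∀ᵐ t ∂(volume.restrict (Ioc y z)), ‖f t‖ ≤ f ζ := by
      rw [ae_restrict_iff' measurableSet_Ioc]
      refine Filter.Eventually.of_forall (fun t ht => ?_)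
      have h1 : (0:ℝ) ≤ f t := by positivity
      rw [Real.norm_eq_abs, abs_of_nonneg h1]
      exact hζmax (Ioc_subset_Icc_self ht)
    have h2 : IntegrableOn (fun t => f t * h t) (Ioc y z) :=
      Integrable.bdd_mul (hhI.mono_set hsub2) hfm hbd
    exact h2.congr (Filter.Eventually.of_forall (fun t => mul_comm _ _))
  have hineq : ∀ y z, 0 ≤ y → y ≤ z → z < c → f z ≤ f y + ∫ t in y..z, h t * f t := by
    intro y z hy0 hyz hzc
    have hz1 : z ∈ Icc (0:ℝ) 1 := ⟨le_trans hy0 hyz, le_trans hzc.le hc1⟩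
    have hy1 : y ∈ Icc (0:ℝ) 1 := ⟨hy0, le_trans hyz hz1.2⟩
    have hzD : z ∈ D := hmem z hz1.1 hzc
    have hmono : ∀ {F : ℝ → ℂ}, IntervalIntegrable F volume 0 z →
        IntervalIntegrable F volume 0 y ∧ IntervalIntegrable F volume y z := by
      intro F hF
      constructor <;> refine hF.mono_set ?_
      · rw [Set.uIcc_of_le hy0, Set.uIcc_of_le hz1.1]
        exact Set.Icc_subset_Icc le_rfl hyz
      · rw [Set.uIcc_of_le hyz, Set.uIcc_of_le hz1.1]
        exact Set.Icc_subset_Icc hy0 le_rfl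
    obtain ⟨iu0y, iuyz⟩ := hmono hzD.2.1
    obtain ⟨ig0y, igyz⟩ := hmono hzD.2.2
    have huz : u z = u y + ∫ t in y..z, u' t := by
      have e1 := (hsol z hz1).1
      have e2 := (hsol y hy1).1
      have e3 := intervalIntegral.integral_add_adjacent_intervals iu0y iuyz
      rw [e1, e2, ← e3]; ring
    have hu'z : u' z = u' y + ∫ t in y..z, g t := by
      have e1 := (hsol z hz1).2
      have e2 := (hsol y hy1).2
      have e3 := intervalIntegral.integral_add_adjacent_intervals ig0y igyz
      rw [e1, e2, ← e3]; ring
    have est1 : ‖u z‖ ≤ ‖u y‖ + ∫ t in y..z, ‖u' t‖ := by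
      rw [huz]
      exact le_trans (norm_add_le _ _)
        (by gcongr; exact intervalIntegral.norm_integral_le_integral_norm hyz)
    have est2 : ‖u' z‖ ≤ ‖u' y‖ + ∫ t in y..z, ‖g t‖ := by
      rw [hu'z]
      exact le_trans (norm_add_le _ _)
        (by gcongr; exact intervalIntegral.norm_integral_le_integral_norm hyz)
    have est3 : (∫ t in y..z, ‖u' t‖) + (∫ t in y..z, ‖g t‖)
        = ∫ t in y..z, (‖u' t‖ + ‖g t‖) :=
      (intervalIntegral.integral_add iuyz.norm igyz.norm).symm
    have est4 : (∫ t in y..z, (‖u' t‖ + ‖g t‖)) ≤ ∫ t in y..z, h t * f t := by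
      apply intervalIntegral.integral_mono_on hyz (iuyz.norm.add igyz.norm)
        (hWint y z hy0 hyz hzc)
      intro t _
      have hg : ‖g t‖ = ‖(q t : ℂ) - lam‖ * ‖u t‖ := norm_mul _ _
      rw [hg, hhdef, hfdef]
      dsimp only
      have h1 := norm_nonneg (u t)
      have h2 := norm_nonneg (u' t)
      have h3 := norm_nonneg ((q t : ℂ) - lam)
      nlinarith [mul_nonneg h3 h1, mul_nonneg h3 h2]
    have : f z ≤ f y + ((∫ t in y..z, ‖u' t‖) + (∫ t in y..z, ‖g t‖)) := by
      rw [hfdef]; dsimp only; linarith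
    rw [est3] at this
    linarith
  obtain ⟨M, hM⟩ := my_gronwall_bound hh hh0 hc1 hfc hfnn hineq hWint
  -- c is itself good
  have humeas : AEStronglyMeasurable u (volume.restrict (Ioo 0 c)) :=
    (hcontu.mono (fun t ht => ⟨ht.1.le, ht.2⟩)).aestronglyMeasurable measurableSet_Ioo
  have hu'meas : AEStronglyMeasurable u' (volume.restrict (Ioo 0 c)) :=
    (hcontu'.mono (fun t ht => ⟨ht.1.le, ht.2⟩)).aestronglyMeasurable measurableSet_Ioo
  have hubd : ∀ᵐ t ∂(volume.restrict (Ioo 0 c)), ‖u t‖ ≤ M := by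
    rw [ae_restrict_iff' measurableSet_Ioo]
    refine Filter.Eventually.of_forall (fun t ht => ?_)
    have := hM t ⟨ht.1.le, ht.2⟩
    have h2 := norm_nonneg (u' t)
    rw [hfdef] at this; dsimp only at this; linarith
  have hu'bd : ∀ᵐ t ∂(volume.restrict (Ioo 0 c)), ‖u' t‖ ≤ M := by
    rw [ae_restrict_iff' measurableSet_Ioo]
    refine Filter.Eventually.of_forall (fun t ht => ?_)
    have := hM t ⟨ht.1.le, ht.2⟩
    have h2 := norm_nonneg (u t)
    rw [hfdef] at this; dsimp only at this; linarith
  have hcD : c ∈ D := by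
    refine ⟨⟨hc0, hc1⟩, ?_, ?_⟩
    · rw [intervalIntegrable_iff_integrableOn_Ioc_of_le hc0]
      refine IntegrableOn.congr_set_ae ?_ Ioo_ae_eq_Ioc.symm
      exact Integrable.mono' (integrableOn_const measure_Ioo_lt_top.ne) hu'meas hu'bd
    · rw [intervalIntegrable_iff_integrableOn_Ioc_of_le hc0]
      refine IntegrableOn.congr_set_ae ?_ Ioo_ae_eq_Ioc.symm
      have h2 : IntegrableOn (fun t => u t * ((q t : ℂ) - lam)) (Ioo 0 c) :=
        Integrable.bdd_mul
          (hQ.mono_set (fun t ht => ⟨ht.1, le_trans ht.2.le hc1⟩)) humeas hubd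
      exact h2.congr (Filter.Eventually.of_forall (fun t => mul_comm _ _))
  -- now 1 ∈ D
  have h1D : (1:ℝ) ∈ D := by
    rcases eq_or_lt_of_le hc1 with hceq | hclt
    · exact hceq ▸ hcD
    · have hIocCI : Ioc c 1 ⊆ Ioc 0 1 := Ioc_subset_Ioc hc0 le_rfl
      by_cases hA : ∀ w, c < w → w ≤ 1 → ¬ IntervalIntegrable u' volume 0 w
      · -- u is eventually constant beyond c
        have huconst : ∀ w, c < w → w ≤ 1 → u w = u 0 := by
          intro w h1 h2
          have e1 := (hsol w ⟨le_trans hc0 h1.le, h2⟩).1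
          rw [intervalIntegral.integral_undef (hA w h1 h2)] at e1
          simpa using e1
        have hgint : IntegrableOn g (Ioc 0 1) := by
          have hp1 : IntegrableOn g (Ioc 0 c) :=
            (intervalIntegrable_iff_integrableOn_Ioc_of_le hc0).1 hcD.2.2
          have hp2 : IntegrableOn g (Ioc c 1) := by
            refine IntegrableOn.congr_fun ((hQ.mono_set hIocCI).mul_const (u 0)) ?_
              measurableSet_Ioc
            intro t ht
            simp only [hgdef]
            rw [huconst t ht.1 ht.2]
          have := hp1.union hp2
          rwa [Ioc_union_Ioc_eq_Ioc hc0 hc1] at this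
        have hu'c : ContinuousOn u' (Icc 0 1) := key₂ 1 ⟨zero_le_one, le_rfl⟩
          ((intervalIntegrable_iff_integrableOn_Ioc_of_le zero_le_one).2 hgint)
        obtain ⟨C, hC⟩ := isCompact_Icc.exists_bound_of_continuousOn hu'c
        have hu'int : IntegrableOn u' (Ioc 0 1) := by
          refine Integrable.mono' (g := fun _ => C)
            (integrableOn_const measure_Ioc_lt_top.ne)
            ((hu'c.mono Ioc_subset_Icc_self).aestronglyMeasurable measurableSet_Ioc) ?_
          rw [ae_restrict_iff' measurableSet_Ioc]
          exact Filter.Eventually.of_forall (fun t ht => hC t (Ioc_subset_Icc_self ht))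
        exact absurd ((intervalIntegrable_iff_integrableOn_Ioc_of_le zero_le_one).2 hu'int)
          (hA 1 hclt le_rfl)
      · push_neg at hA
        obtain ⟨w₁, hw₁c, hw₁1, hw₁⟩ := hA
        by_cases hB : ∀ w, c < w → w ≤ 1 → ¬ IntervalIntegrable g volume 0 w
        · have hu'const : ∀ w, c < w → w ≤ 1 → u' w = u' 0 := by
            intro w h1 h2
            have e1 := (hsol w ⟨le_trans hc0 h1.le, h2⟩).2
            rw [intervalIntegral.integral_undef (hB w h1 h2)] at e1
            simpa using e1
          have hu'int : IntegrableOn u' (Ioc 0 1) := by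
            have hp1 : IntegrableOn u' (Ioc 0 c) :=
              (intervalIntegrable_iff_integrableOn_Ioc_of_le hc0).1 hcD.2.1
            have hp2 : IntegrableOn u' (Ioc c 1) := by
              have hcc : IntegrableOn (fun _ : ℝ => u' 0) (Ioc c 1) :=
                integrableOn_const measure_Ioc_lt_top.ne
              refine hcc.congr_fun ?_ measurableSet_Ioc
              intro t ht
              exact (hu'const t ht.1 ht.2).symm
            have := hp1.union hp2
            rwa [Ioc_union_Ioc_eq_Ioc hc0 hc1] at this
          have huc : ContinuousOn u (Icc 0 1) := key₁ 1 ⟨zero_le_one, le_rfl⟩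
            ((intervalIntegrable_iff_integrableOn_Ioc_of_le zero_le_one).2 hu'int)
          obtain ⟨C, hC⟩ := isCompact_Icc.exists_bound_of_continuousOn huc
          have hgint : IntegrableOn g (Ioc 0 1) := by
            have h2 : IntegrableOn (fun t => u t * ((q t : ℂ) - lam)) (Ioc 0 1) := by
              refine Integrable.bdd_mul (c := C) hQ
                ((huc.mono Ioc_subset_Icc_self).aestronglyMeasurable measurableSet_Ioc) ?_
              rw [ae_restrict_iff' measurableSet_Ioc]
              exact Filter.Eventually.of_forall (fun t ht => hC t (Ioc_subset_Icc_self ht))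
            exact h2.congr (Filter.Eventually.of_forall (fun t => mul_comm _ _))
          exact absurd ((intervalIntegrable_iff_integrableOn_Ioc_of_le zero_le_one).2 hgint)
            (hB 1 hclt le_rfl)
        · push_neg at hB
          obtain ⟨w₂, hw₂c, hw₂1, hw₂⟩ := hB
          have hwc : c < min w₁ w₂ := lt_min hw₁c hw₂c
          have hwD : min w₁ w₂ ∈ D := by
            refine ⟨⟨le_trans hc0 hwc.le, le_trans (min_le_left _ _) hw₁1⟩,
              hw₁.mono_set ?_, hw₂.mono_set ?_⟩
            · rw [Set.uIcc_of_le (le_trans hc0 hwc.le),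
                Set.uIcc_of_le (le_trans hc0 (lt_of_lt_of_le hwc (min_le_left _ _)).le)]
              exact Set.Icc_subset_Icc le_rfl (min_le_left _ _)
            · rw [Set.uIcc_of_le (le_trans hc0 hwc.le),
                Set.uIcc_of_le (le_trans hc0 (lt_of_lt_of_le hwc (min_le_right _ _)).le)]
              exact Set.Icc_subset_Icc le_rfl (min_le_right _ _)
          exact absurd (le_csSup hBdd hwD) (not_le.2 hwc)
  exact ⟨(intervalIntegrable_iff_integrableOn_Ioc_of_le zero_le_one).1 h1D.2.1,
    (intervalIntegrable_iff_integrableOn_Ioc_of_le zero_le_one).1 h1D.2.2,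
    key₁ 1 ⟨zero_le_one, le_rfl⟩ h1D.2.1,
    key₂ 1 ⟨zero_le_one, le_rfl⟩ h1D.2.2⟩

lemma my_parts {F G f g : ℝ → ℂ}
    (hf : IntegrableOn f (Set.Ioc 0 1)) (hg : IntegrableOn g (Set.Ioc 0 1))
    (hF : ∀ z ∈ Set.Icc (0:ℝ) 1, F z = F 0 + ∫ t in (0:ℝ)..z, f t)
    (hG : ∀ z ∈ Set.Icc (0:ℝ) 1, G z = G 0 + ∫ t in (0:ℝ)..z, g t) :
    F 1 * G 1 - F 0 * G 0 = ∫ t in (0:ℝ)..1, (F t * g t + f t * G t) := by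
  set μ := volume.restrict (Set.Ioc (0:ℝ) 1) with hμ
  haveI : IsFiniteMeasure μ := ⟨by
    rw [hμ, Measure.restrict_apply_univ]; exact measure_Ioc_lt_top⟩
  have hfμ : Integrable f μ := hf
  have hgμ : Integrable g μ := hg
  set Φ : ℝ → ℂ := fun x => ∫ t in Ioc (0:ℝ) x, f t with hΦ
  set Γ : ℝ → ℂ := fun x => ∫ t in Ioc (0:ℝ) x, g t with hΓ
  have hfIcc : IntegrableOn f (Icc (0:ℝ) 1) := hf.congr_set_ae Ioc_ae_eq_Icc.symm
  have hgIcc : IntegrableOn g (Icc (0:ℝ) 1) := hg.congr_set_ae Ioc_ae_eq_Icc.symm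
  have hΦc : ContinuousOn Φ (Icc (0:ℝ) 1) := intervalIntegral.continuousOn_primitive hfIcc
  have hΓc : ContinuousOn Γ (Icc (0:ℝ) 1) := intervalIntegral.continuousOn_primitive hgIcc
  -- core Fubini identity
  have hK : Integrable (fun p : ℝ × ℝ => f p.1 * g p.2) (μ.prod μ) := hfμ.mul_prod hgμ
  have hA : MeasurableSet {p : ℝ × ℝ | p.2 ≤ p.1} :=
    measurableSet_le measurable_snd measurable_fst
  have hsplit : (∫ p in {p : ℝ × ℝ | p.2 ≤ p.1}, f p.1 * g p.2 ∂(μ.prod μ)) +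
      (∫ p in {p : ℝ × ℝ | p.2 ≤ p.1}ᶜ, f p.1 * g p.2 ∂(μ.prod μ))
      = (∫ x, f x ∂μ) * (∫ x, g x ∂μ) := by
    rw [integral_add_compl hA hK, integral_prod_mul]
  have hrestr : ∀ x ∈ Ioc (0:ℝ) 1, ∀ (F' : ℝ → ℂ), (∫ y in Iic x, F' y ∂μ) = ∫ y in Ioc (0:ℝ) x, F' y := by
    intro x hx F'
    have hxy : Iic x ∩ Ioc 0 1 = Ioc (0:ℝ) x := by
      ext y
      simp only [mem_inter_iff, mem_Iic, mem_Ioc]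
      exact ⟨fun h => ⟨h.2.1, h.1⟩, fun h => ⟨h.2, h.1, le_trans h.2 hx.2⟩⟩
    rw [hμ, Measure.restrict_restrict measurableSet_Iic, hxy]
  have hrestr' : ∀ x ∈ Ioc (0:ℝ) 1, ∀ (F' : ℝ → ℂ), IntegrableOn F' (Ioc 0 1) →
      (∫ y in Iio x, F' y ∂μ) = ∫ y in Ioc (0:ℝ) x, F' y := by
    intro x hx F' hF'
    rw [hμ, Measure.restrict_restrict measurableSet_Iio]
    have : Iio x ∩ Ioc 0 1 = Ioo 0 x := by
      ext y
      simp only [mem_inter_iff, mem_Iio, mem_Ioc, mem_Ioo]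
      constructor
      · rintro ⟨h1, h2, h3⟩; exact ⟨h2, h1⟩
      · rintro ⟨h1, h2⟩; exact ⟨h2, h1, le_trans h2.le hx.2⟩
    rw [this, ← integral_Ioc_eq_integral_Ioo]
  -- T₁ : integral over s ≤ t region
  have hT1 : (∫ p in {p : ℝ × ℝ | p.2 ≤ p.1}, f p.1 * g p.2 ∂(μ.prod μ))
      = ∫ x, f x * Γ x ∂μ := by
    rw [← integral_indicator hA]
    rw [integral_prod _ (hK.indicator hA)]
    apply integral_congr_ae
    filter_upwards [ae_restrict_mem measurableSet_Ioc] with x hx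
    have : (fun y => ({p : ℝ × ℝ | p.2 ≤ p.1}).indicator (fun p => f p.1 * g p.2) (x, y))
        = (Iic x).indicator (fun y => f x * g y) := by
      ext y
      simp only [Set.indicator_apply, Set.mem_setOf_eq, Set.mem_Iic]
    rw [this, integral_indicator measurableSet_Iic, integral_const_mul, hrestr x hx g]
  have hT2 : (∫ p in {p : ℝ × ℝ | p.2 ≤ p.1}ᶜ, f p.1 * g p.2 ∂(μ.prod μ))
      = ∫ x, Φ x * g x ∂μ := by
    rw [← integral_indicator hA.compl]
    have hswap := integral_prod_swap (ν := μ) (μ := μ)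
      (({p : ℝ × ℝ | p.2 ≤ p.1}ᶜ).indicator (fun p => f p.1 * g p.2))
    rw [← hswap]
    have hint : Integrable
        (fun z : ℝ × ℝ => ({p : ℝ × ℝ | p.2 ≤ p.1}ᶜ).indicator (fun p => f p.1 * g p.2) z.swap)
        (μ.prod μ) := (hK.indicator hA.compl).swap
    rw [integral_prod _ hint]
    apply integral_congr_ae
    filter_upwards [ae_restrict_mem measurableSet_Ioc] with x hx
    have : (fun y => ({p : ℝ × ℝ | p.2 ≤ p.1}ᶜ).indicator (fun p => f p.1 * g p.2) (Prod.swap (x, y)))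
        = (Iio x).indicator (fun y => f y * g x) := by
      ext y
      simp only [Set.indicator_apply, Set.mem_compl_iff, Set.mem_setOf_eq, Set.mem_Iio,
        Prod.swap_prod_mk, not_le]
    rw [this, integral_indicator measurableSet_Iio, integral_mul_const, hrestr' x hx f hf]
  -- bounds for Φ, Γ
  obtain ⟨CΦ, hCΦ⟩ := isCompact_Icc.exists_bound_of_continuousOn hΦc
  obtain ⟨CΓ, hCΓ⟩ := isCompact_Icc.exists_bound_of_continuousOn hΓc
  have hΦm : AEStronglyMeasurable Φ μ :=
    (hΦc.mono Ioc_subset_Icc_self).aestronglyMeasurable measurableSet_Ioc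
  have hΓm : AEStronglyMeasurable Γ μ :=
    (hΓc.mono Ioc_subset_Icc_self).aestronglyMeasurable measurableSet_Ioc
  have hΦbd : ∀ᵐ x ∂μ, ‖Φ x‖ ≤ CΦ := by
    rw [hμ, ae_restrict_iff' measurableSet_Ioc]
    exact Filter.Eventually.of_forall (fun x hx => hCΦ x (Ioc_subset_Icc_self hx))
  have hΓbd : ∀ᵐ x ∂μ, ‖Γ x‖ ≤ CΓ := by
    rw [hμ, ae_restrict_iff' measurableSet_Ioc]
    exact Filter.Eventually.of_forall (fun x hx => hCΓ x (Ioc_subset_Icc_self hx))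
  have hΦg : Integrable (fun x => Φ x * g x) μ := Integrable.bdd_mul hgμ hΦm hΦbd
  have hfΓ : Integrable (fun x => f x * Γ x) μ :=
    (Integrable.bdd_mul hfμ hΓm hΓbd).congr
      (Filter.Eventually.of_forall (fun x => mul_comm _ _))
  -- rewrite the RHS interval integral
  have hFval : ∀ x ∈ Ioc (0:ℝ) 1, F x = F 0 + Φ x := by
    intro x hx
    rw [hF x ⟨hx.1.le, hx.2⟩, intervalIntegral.integral_of_le hx.1.le]
  have hGval : ∀ x ∈ Ioc (0:ℝ) 1, G x = G 0 + Γ x := by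
    intro x hx
    rw [hG x ⟨hx.1.le, hx.2⟩, intervalIntegral.integral_of_le hx.1.le]
  have hRHS : (∫ t in (0:ℝ)..1, (F t * g t + f t * G t))
      = ∫ x, ((F 0 + Φ x) * g x + f x * (G 0 + Γ x)) ∂μ := by
    rw [intervalIntegral.integral_of_le zero_le_one]
    apply integral_congr_ae
    filter_upwards [ae_restrict_mem measurableSet_Ioc] with x hx
    rw [hFval x hx, hGval x hx]
  rw [hRHS]
  have hsum : (∫ x, ((F 0 + Φ x) * g x + f x * (G 0 + Γ x)) ∂μ)
      = F 0 * (∫ x, g x ∂μ) + (∫ x, Φ x * g x ∂μ)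
        + ((∫ x, f x ∂μ) * G 0 + (∫ x, f x * Γ x ∂μ)) := by
    have e1 : ∀ x, (F 0 + Φ x) * g x + f x * (G 0 + Γ x)
        = (F 0 * g x + Φ x * g x) + (f x * G 0 + f x * Γ x) := fun x => by ring
    simp_rw [e1]
    have h4 : Integrable (fun x => F 0 * g x) μ := hgμ.const_mul _
    have h5 : Integrable (fun x => f x * G 0) μ := hfμ.mul_const _
    have h6 : Integrable (fun x => F 0 * g x + Φ x * g x) μ := h4.add hΦg
    have h7 : Integrable (fun x => f x * G 0 + f x * Γ x) μ := h5.add hfΓ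
    rw [integral_add h6 h7, integral_add h4 hΦg, integral_add h5 hfΓ,
      integral_const_mul, integral_mul_const]
  rw [hsum]
  have hF1 : F 1 = F 0 + ∫ x, f x ∂μ := by
    rw [hF 1 ⟨zero_le_one, le_rfl⟩, intervalIntegral.integral_of_le zero_le_one]
  have hG1 : G 1 = G 0 + ∫ x, g x ∂μ := by
    rw [hG 1 ⟨zero_le_one, le_rfl⟩, intervalIntegral.integral_of_le zero_le_one]
  have hcore : (∫ x, f x * Γ x ∂μ) + (∫ x, Φ x * g x ∂μ)
      = (∫ x, f x ∂μ) * (∫ x, g x ∂μ) := by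
    rw [← hT1, ← hT2]; exact hsplit
  rw [hF1, hG1]
  linear_combination -hcore

lemma my_wronskian {q : ℝ → ℝ} {lam : ℂ} {u u' v v' : ℝ → ℂ}
    (hq : IntegrableOn q (Set.Ioo 0 1))
    (hu : SchrodingerSol q lam u u') (hv : SchrodingerSol q lam v v') :
    u 1 * v' 1 - u' 1 * v 1 = u 0 * v' 0 - u' 0 * v 0 := by
  obtain ⟨hu'I, hguI, _, _⟩ := my_regular hq hu
  obtain ⟨hv'I, hgvI, _, _⟩ := my_regular hq hv
  have e1 : u 1 * v' 1 - u 0 * v' 0 = ∫ t in (0:ℝ)..1,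
      (u t * (((q t : ℂ) - lam) * v t) + u' t * v' t) :=
    my_parts hu'I hgvI (fun z hz => (hu z hz).1) (fun z hz => (hv z hz).2)
  have e2 : u' 1 * v 1 - u' 0 * v 0 = ∫ t in (0:ℝ)..1,
      (u' t * v' t + (((q t : ℂ) - lam) * u t) * v t) :=
    my_parts hguI hv'I (fun z hz => (hu z hz).2) (fun z hz => (hv z hz).1)
  have e3 : (∫ t in (0:ℝ)..1, (u t * (((q t : ℂ) - lam) * v t) + u' t * v' t))
      = ∫ t in (0:ℝ)..1, (u' t * v' t + (((q t : ℂ) - lam) * u t) * v t) := by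
    apply intervalIntegral.integral_congr
    intro t _
    ring
  linear_combination e1 - e2 + e3

lemma my_reflect {q : ℝ → ℝ} {lam : ℂ} {u u' : ℝ → ℂ}
    (hq : IntegrableOn q (Set.Ioo 0 1))
    (hqsym : ∀ᵐ z ∂(volume.restrict (Set.Ioo (0:ℝ) 1)), q z = q (1 - z))
    (h : SchrodingerSol q lam u u') :
    SchrodingerSol q lam (fun z => u (1 - z)) (fun z => -u' (1 - z)) := by
  obtain ⟨hu'I, hgI, _, _⟩ := my_regular hq h
  have h1z : IntervalIntegrable u' volume 0 1 :=
    (intervalIntegrable_iff_integrableOn_Ioc_of_le zero_le_one).2 hu'I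
  have hg1 : IntervalIntegrable (fun t => ((q t : ℂ) - lam) * u t) volume 0 1 :=
    (intervalIntegrable_iff_integrableOn_Ioc_of_le zero_le_one).2 hgI
  intro z hz
  have hz' : (1:ℝ) - z ∈ Icc (0:ℝ) 1 := ⟨by linarith [hz.2], by linarith [hz.1]⟩
  have hmono : ∀ {F : ℝ → ℂ}, IntervalIntegrable F volume 0 1 →
      IntervalIntegrable F volume 0 (1-z) ∧ IntervalIntegrable F volume (1-z) 1 := by
    intro F hF
    constructor <;> refine hF.mono_set ?_
    · rw [Set.uIcc_of_le hz'.1, Set.uIcc_of_le zero_le_one]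
      exact Set.Icc_subset_Icc le_rfl hz'.2
    · rw [Set.uIcc_of_le hz'.2, Set.uIcc_of_le zero_le_one]
      exact Set.Icc_subset_Icc hz'.1 le_rfl
  constructor
  · show u (1 - z) = u (1 - 0) + ∫ t in (0:ℝ)..z, -u' (1 - t)
    rw [sub_zero]
    have e1 : (∫ t in (0:ℝ)..z, -u' (1 - t)) = -∫ t in (0:ℝ)..z, u' (1 - t) :=
      intervalIntegral.integral_neg
    have e2 : (∫ t in (0:ℝ)..z, u' (1 - t)) = ∫ s in (1 - z)..(1:ℝ), u' s := by
      have := intervalIntegral.integral_comp_sub_left (a := 0) (b := z) u' 1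
      simpa using this
    obtain ⟨i1, i2⟩ := hmono h1z
    have e3 := intervalIntegral.integral_add_adjacent_intervals i1 i2
    have f1 := (h 1 ⟨zero_le_one, le_rfl⟩).1
    have f2 := (h (1-z) hz').1
    rw [e1, e2, f1, f2, ← e3]; ring
  · show -u' (1 - z) = -u' (1 - 0) + ∫ t in (0:ℝ)..z, ((q t : ℂ) - lam) * u (1 - t)
    rw [sub_zero]
    have hsym' : ∀ᵐ t : ℝ, t ∈ Ioo (0:ℝ) 1 → q t = q (1 - t) :=
      (ae_restrict_iff' measurableSet_Ioo).1 hqsym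
    have hne : ∀ᵐ t : ℝ, t ∉ ({1} : Set ℝ) :=
      (measure_eq_zero_iff_ae_notMem (μ := volume)).1 (measure_singleton 1)
    have e0 : (∫ t in (0:ℝ)..z, ((q t : ℂ) - lam) * u (1 - t))
        = ∫ t in (0:ℝ)..z, ((q (1 - t) : ℂ) - lam) * u (1 - t) := by
      apply intervalIntegral.integral_congr_ae
      filter_upwards [hsym', hne] with t h1 h2 h3
      rw [Set.uIoc_of_le hz.1] at h3
      have ht : t ∈ Ioo (0:ℝ) 1 :=
        ⟨h3.1, lt_of_le_of_ne (le_trans h3.2 hz.2) (fun hc => h2 (by simp [hc]))⟩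
      rw [h1 ht]
    have e2 : (∫ t in (0:ℝ)..z, ((q (1 - t) : ℂ) - lam) * u (1 - t))
        = ∫ s in (1 - z)..(1:ℝ), ((q s : ℂ) - lam) * u s := by
      have := intervalIntegral.integral_comp_sub_left (a := 0) (b := z)
        (fun s => ((q s : ℂ) - lam) * u s) 1
      simpa using this
    obtain ⟨i1, i2⟩ := hmono hg1
    have e3 := intervalIntegral.integral_add_adjacent_intervals i1 i2
    have f1 := (h 1 ⟨zero_le_one, le_rfl⟩).2
    have f2 := (h (1-z) hz').2
    rw [e0, e2, f1, f2, ← e3]; ring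

/-- Lemma 3.1: solutions on the four edges incident to a vertex satisfying
the Kirchhoff conditions obey the reduced vertex Schrödinger equation
`(1/4)·∑ u_j(1)/S_j(1) = ((1/4)·∑ S_j'(1)/S_j(1))·u₁(0)`. -/
theorem reduced_vertex_schrodinger_equation (lam : ℂ) (q : Fin 4 → ℝ → ℝ)
    (hqint : ∀ j, IntegrableOn (q j) (Set.Ioo 0 1))
    (hqsym : ∀ j, ∀ᵐ z ∂(volume.restrict (Set.Ioo (0 : ℝ) 1)), q j z = q j (1 - z))
    (S S' : Fin 4 → ℝ → ℂ)
    (hS : ∀ j, SchrodingerSol (q j) lam (S j) (S' j))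
    (hS0 : ∀ j, S j 0 = 0) (hS'0 : ∀ j, S' j 0 = 1)
    (hS1 : ∀ j, S j 1 ≠ 0)
    (u u' : Fin 4 → ℝ → ℂ)
    (hu : ∀ j, SchrodingerSol (q j) lam (u j) (u' j))
    (hK1 : ∀ j j', u j 0 = u j' 0)
    (hK2 : ∑ j : Fin 4, u' j 0 = 0) :
    (1 / 4 : ℂ) * ∑ j : Fin 4, u j 1 / S j 1
      = ((1 / 4 : ℂ) * ∑ j : Fin 4, S' j 1 / S j 1) * u 0 0 := by
  have key : ∀ j, u j 1 = u j 0 * S' j 1 + u' j 0 * S j 1 := by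
    intro j
    have hrefl := my_reflect (hqint j) (hqsym j) (hS j)
    have hw := my_wronskian (hqint j) (hu j) hrefl
    simp only [sub_self, sub_zero, hS0 j, hS'0 j] at hw
    linear_combination -hw
  have div : ∀ j, u j 1 / S j 1 = u 0 0 * (S' j 1 / S j 1) + u' j 0 := by
    intro j
    rw [key j, hK1 j 0, add_div, mul_div_assoc, mul_div_cancel_right₀ _ (hS1 j)]
  rw [Finset.sum_congr rfl (fun j _ => div j), Finset.sum_add_distrib, hK2, add_zero,
    ← Finset.mul_sum]
  ring
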